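/- Let A be a finite nonempty set, a* ∈ A, and let θ : [0,1] → ℝ be continuous on [0,1], twice differentiable on (0,1] with θ''(x) > 0 for all x ∈ (0,1], and θ'(x) → −∞ as x → 0⁺; let ψ : (−∞, θ'(1)] → (0,1] denote the inverse of the strictly increasing map θ' : (0,1] → (−∞, θ'(1)]. For each n, let y_n ∈ ℝ^A and let x_n be a maximizer over the simplex Δ(A) = {x : A → ℝ : x(a) ≥ 0, Σ_a x(a) = 1} of the function x ↦ Σ_a y_n(a)·x(a) − Σ_a θ(x(a)). If y_n(a) − y_n(a*) → −∞ as n → ∞ for every a ≠ a*, then x_n converges to the point mass e_{a*} at a*; moreover, for every n with y_n(a) ≤ y_n(a*) for all a ≠ a*, one has max_a |x_n(a) − e_{a*}(a)| ≤ Σ_{a ≠ a*} ψ(θ'(1) + y_n(a) − y_n(a*)). -/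

import Mathlib

open Filter

private lemma sum_split {α : Type*} [Fintype α] [DecidableEq α] {a b : α} (hab : a ≠ b)
    (f : α → ℝ) :
    ∑ c, f c = (∑ c ∈ (Finset.univ.erase b).erase a, f c) + f a + f b := by
  rw [Finset.sum_erase_add _ _ (Finset.mem_erase.2 ⟨hab, Finset.mem_univ a⟩),
    Finset.sum_erase_add _ _ (Finset.mem_univ b)]

/-- Convergence of the regularized best response (mirror map) for a
decomposable regularizer `h(x) = ∑_a θ(x(a))` with steep kernel `θ`, together with the
quantitative bound in terms of the inverse `ψ` of `θ'`. -/
theorem mirror_map_convergence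
    {α : Type*} [Fintype α] [Nonempty α] [DecidableEq α] (aStar : α)
    (θ θ' θ'' ψ : ℝ → ℝ)
    (hθc : ContinuousOn θ (Set.Icc 0 1))
    (hd1 : ∀ x ∈ Set.Ioc (0 : ℝ) 1, HasDerivWithinAt θ (θ' x) (Set.Ioc 0 1) x)
    (hd2 : ∀ x ∈ Set.Ioc (0 : ℝ) 1, HasDerivWithinAt θ' (θ'' x) (Set.Ioc 0 1) x)
    (hconv : ∀ x ∈ Set.Ioc (0 : ℝ) 1, 0 < θ'' x)
    (hsteep : Tendsto θ' (nhdsWithin 0 (Set.Ioi 0)) atBot)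
    (hψleft : ∀ x ∈ Set.Ioc (0 : ℝ) 1, ψ (θ' x) = x)
    (hψright : ∀ z ≤ θ' 1, ψ z ∈ Set.Ioc (0 : ℝ) 1 ∧ θ' (ψ z) = z)
    (y x : ℕ → α → ℝ)
    (hx : ∀ n, (∀ a, 0 ≤ x n a) ∧ (∑ a, x n a) = 1 ∧
      ∀ z : α → ℝ, (∀ a, 0 ≤ z a) → (∑ a, z a) = 1 →
        (∑ a, y n a * z a) - ∑ a, θ (z a) ≤ (∑ a, y n a * x n a) - ∑ a, θ (x n a))
    (hy : ∀ a, a ≠ aStar → Tendsto (fun n => y n a - y n aStar) atTop atBot) :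
    (∀ a, Tendsto (fun n => x n a) atTop (nhds (if a = aStar then (1 : ℝ) else 0))) ∧
    ∀ n, (∀ a, a ≠ aStar → y n a ≤ y n aStar) →
      ∀ a, |x n a - (if a = aStar then (1 : ℝ) else 0)| ≤
        ∑ a' ∈ Finset.univ.erase aStar, ψ (θ' 1 + y n a' - y n aStar) := by
  -- θ' is strictly increasing on (0,1]
  have hIocmem : ∀ t ∈ Set.Ioo (0 : ℝ) 1, Set.Ioc (0 : ℝ) 1 ∈ nhds t := fun t ht =>
    Filter.mem_of_superset (isOpen_Ioo.mem_nhds ht) Set.Ioo_subset_Ioc_self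
  have hmono : StrictMonoOn θ' (Set.Ioc 0 1) := by
    apply strictMonoOn_of_deriv_pos (convex_Ioc 0 1)
    · exact fun t ht => (hd2 t ht).continuousWithinAt
    · intro t ht
      rw [interior_Ioc] at ht
      have h := (hd2 t (Set.Ioo_subset_Ioc_self ht)).hasDerivAt (hIocmem t ht)
      rw [h.deriv]
      exact hconv t (Set.Ioo_subset_Ioc_self ht)
  -- key exchange estimate
  have key : ∀ n a, a ≠ aStar → ∀ s, 0 < s → s < x n a →
      θ' s < θ' 1 + (y n a - y n aStar) := by
    intro n a ha s hs hsx
    obtain ⟨hpos, hsum, hopt⟩ := hx n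
    set ε := x n a - s with hεdef
    have hε : 0 < ε := by simp [hεdef]; linarith
    have hpair : x n aStar + x n a ≤ 1 := by
      have h := sum_split ha (x n)
      have hrest : 0 ≤ ∑ c ∈ (Finset.univ.erase aStar).erase a, x n c :=
        Finset.sum_nonneg fun c _ => hpos c
      linarith [hsum, h]
    have hxa1 : x n a ≤ 1 := by linarith [hpos aStar]
    have hxs1 : x n aStar + ε < 1 := by
      have : x n aStar + ε < x n aStar + x n a := by linarith
      linarith
    -- the competitor
    set z : α → ℝ := fun b => if b = aStar then x n aStar + ε else if b = a then s else x n b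
      with hzdef
    have hza : z a = s := by simp [hzdef, ha]
    have hzs : z aStar = x n aStar + ε := by simp [hzdef]
    have hzrest : ∀ b, b ≠ a → b ≠ aStar → z b = x n b := by
      intro b h1 h2; simp [hzdef, h1, h2]
    have hznn : ∀ b, 0 ≤ z b := by
      intro b
      by_cases h1 : b = aStar
      · rw [h1, hzs]; linarith [hpos aStar]
      by_cases h2 : b = a
      · rw [h2, hza]; linarith
      · rw [hzrest b h2 h1]; exact hpos b
    have hzsum : ∑ b, z b = 1 := by
      rw [sum_split ha z, hza, hzs]
      rw [sum_split ha (x n)] at hsum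
      have : ∑ c ∈ (Finset.univ.erase aStar).erase a, z c
          = ∑ c ∈ (Finset.univ.erase aStar).erase a, x n c := by
        apply Finset.sum_congr rfl
        intro c hc
        exact hzrest c (Finset.ne_of_mem_erase hc)
          (Finset.ne_of_mem_erase (Finset.mem_of_mem_erase hc))
      rw [this]; linarith
    -- optimality inequality reduced to coordinates a, aStar
    have hopt' := hopt z hznn hzsum
    have hco : y n a * s + y n aStar * (x n aStar + ε) - θ s - θ (x n aStar + ε)
        ≤ y n a * x n a + y n aStar * x n aStar - θ (x n a) - θ (x n aStar) := by
      rw [sum_split ha (fun b => y n b * z b), sum_split ha (fun b => θ (z b)),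
        sum_split ha (fun b => y n b * x n b), sum_split ha (fun b => θ (x n b))] at hopt'
      have e1 : ∑ c ∈ (Finset.univ.erase aStar).erase a, y n c * z c
          = ∑ c ∈ (Finset.univ.erase aStar).erase a, y n c * x n c :=
        Finset.sum_congr rfl fun c hc => by
          rw [hzrest c (Finset.ne_of_mem_erase hc)
            (Finset.ne_of_mem_erase (Finset.mem_of_mem_erase hc))]
      have e2 : ∑ c ∈ (Finset.univ.erase aStar).erase a, θ (z c)
          = ∑ c ∈ (Finset.univ.erase aStar).erase a, θ (x n c) :=
        Finset.sum_congr rfl fun c hc => by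
          rw [hzrest c (Finset.ne_of_mem_erase hc)
            (Finset.ne_of_mem_erase (Finset.mem_of_mem_erase hc))]
      rw [e1, e2, hza, hzs] at hopt'
      linarith
    -- mean value theorem on [s, x n a]
    obtain ⟨c, hc, hceq⟩ := exists_hasDerivAt_eq_slope θ θ' hsx
      (hθc.mono (Set.Icc_subset_Icc hs.le hxa1))
      (fun t ht => (hd1 t ⟨lt_trans hs ht.1, le_of_lt (lt_of_lt_of_le ht.2 hxa1)⟩).hasDerivAt
        (hIocmem t ⟨lt_trans hs ht.1, lt_of_lt_of_le ht.2 hxa1⟩))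
    -- mean value theorem on [x n aStar, x n aStar + ε]
    have hlt2 : x n aStar < x n aStar + ε := by linarith
    obtain ⟨d, hd, hdeq⟩ := exists_hasDerivAt_eq_slope θ θ' hlt2
      (hθc.mono (Set.Icc_subset_Icc (hpos aStar) hxs1.le))
      (fun t ht => (hd1 t ⟨lt_of_le_of_lt (hpos aStar) ht.1,
          le_of_lt (lt_of_lt_of_le ht.2 hxs1.le)⟩).hasDerivAt
        (hIocmem t ⟨lt_of_le_of_lt (hpos aStar) ht.1, lt_of_lt_of_le ht.2 hxs1.le⟩))
    have hεne : (ε : ℝ) ≠ 0 := ne_of_gt hε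
    have hceq' : θ (x n a) - θ s = ε * θ' c := by
      rw [hceq, ← hεdef]; field_simp
    have hdeq' : θ (x n aStar + ε) - θ (x n aStar) = ε * θ' d := by
      rw [hdeq, show x n aStar + ε - x n aStar = ε by ring]; field_simp
    -- combine
    have hcmp : y n aStar - y n a ≤ θ' d - θ' c := by
      have hexp : y n a * x n a = y n a * s + y n a * ε := by rw [hεdef]; ring
      have h1 : ε * (y n aStar - y n a) ≤ ε * (θ' d - θ' c) := by nlinarith [hco, hceq', hdeq', hexp]
      exact le_of_mul_le_mul_left (by linarith) hε
    have hcmem : c ∈ Set.Ioc (0 : ℝ) 1 := ⟨lt_trans hs hc.1, le_of_lt (lt_of_lt_of_le hc.2 hxa1)⟩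
    have hdmem : d ∈ Set.Ioc (0 : ℝ) 1 :=
      ⟨lt_of_le_of_lt (hpos aStar) hd.1, le_of_lt (lt_of_lt_of_le hd.2 hxs1.le)⟩
    have hsc : θ' s < θ' c := hmono ⟨hs, le_of_lt (lt_of_lt_of_le hsx hxa1)⟩ hcmem hc.1
    have hd1' : θ' d < θ' 1 := hmono hdmem (Set.right_mem_Ioc.2 one_pos)
      (lt_of_lt_of_le hd.2 hxs1.le)
    linarith
  -- quantitative per-coordinate bound
  have bound : ∀ n a, a ≠ aStar → y n a ≤ y n aStar →
      x n a ≤ ψ (θ' 1 + y n a - y n aStar) := by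
    intro n a ha hle
    have hz : θ' 1 + y n a - y n aStar ≤ θ' 1 := by linarith
    obtain ⟨hmem, heq⟩ := hψright _ hz
    by_contra h
    push_neg at h
    have := key n a ha _ hmem.1 h
    rw [heq] at this
    linarith
  constructor
  · -- convergence
    have hconv0 : ∀ a, a ≠ aStar → Tendsto (fun n => x n a) atTop (nhds 0) := by
      intro a ha
      rw [Metric.tendsto_atTop]
      intro ε hε
      set δ : ℝ := min (ε / 2) 1 with hδdef
      have hδpos : 0 < δ := lt_min (by linarith) one_pos
      have hδ1 : δ ≤ 1 := min_le_right _ _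
      have hev : ∀ᶠ n in atTop, y n a - y n aStar ≤ min (θ' δ - θ' 1) 0 :=
        (hy a ha).eventually (eventually_le_atBot _)
      obtain ⟨N, hN⟩ := hev.exists_forall_of_atTop
      refine ⟨N, fun n hn => ?_⟩
      have h1 : y n a - y n aStar ≤ θ' δ - θ' 1 := le_trans (hN n hn) (min_le_left _ _)
      have h2 : y n a ≤ y n aStar := by
        have := le_trans (hN n hn) (min_le_right _ _); linarith
      have hb := bound n a ha h2
      have hz : θ' 1 + y n a - y n aStar ≤ θ' 1 := by linarith
      obtain ⟨hmem, heq⟩ := hψright _ hz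
      have hψδ : ψ (θ' 1 + y n a - y n aStar) ≤ δ := by
        by_contra h
        push_neg at h
        have := hmono ⟨hδpos, hδ1⟩ hmem h
        rw [heq] at this
        linarith
      have hxnn := (hx n).1 a
      have : x n a ≤ δ := le_trans hb hψδ
      have : x n a < ε := lt_of_le_of_lt (le_trans this (min_le_left _ _)) (by linarith)
      rw [Real.dist_eq]
      rw [abs_of_nonneg (by linarith [hxnn])]
      linarith [hxnn]
    intro a
    by_cases ha : a = aStar
    · rw [ha, if_pos rfl]
      have hsumto : Tendsto (fun n => ∑ c ∈ Finset.univ.erase aStar, x n c) atTop (nhds 0) := by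
        have := tendsto_finset_sum (Finset.univ.erase aStar)
          (fun c hc => hconv0 c (Finset.ne_of_mem_erase hc))
        simpa using this
      have : Tendsto (fun n => 1 - ∑ c ∈ Finset.univ.erase aStar, x n c) atTop (nhds (1 - 0)) :=
        tendsto_const_nhds.sub hsumto
      rw [sub_zero] at this
      refine this.congr fun n => ?_
      have h := Finset.sum_erase_add Finset.univ (x n) (Finset.mem_univ aStar)
      rw [(hx n).2.1] at h
      linarith
    · simp only [if_neg ha]
      exact hconv0 a ha
  · -- quantitative bound
    intro n hyn a
    have hψnn : ∀ a' ∈ Finset.univ.erase aStar, 0 ≤ ψ (θ' 1 + y n a' - y n aStar) := by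
      intro a' ha'
      have h := hyn a' (Finset.ne_of_mem_erase ha')
      have hz : θ' 1 + y n a' - y n aStar ≤ θ' 1 := by linarith
      exact le_of_lt (hψright _ hz).1.1
    by_cases ha : a = aStar
    · rw [ha, if_pos rfl]
      have h := Finset.sum_erase_add Finset.univ (x n) (Finset.mem_univ aStar)
      rw [(hx n).2.1] at h
      have hsnn : 0 ≤ ∑ c ∈ Finset.univ.erase aStar, x n c :=
        Finset.sum_nonneg fun c _ => (hx n).1 c
      have habs : |x n aStar - 1| = ∑ c ∈ Finset.univ.erase aStar, x n c := by
        rw [abs_of_nonpos (by linarith)]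
        linarith
      rw [habs]
      apply Finset.sum_le_sum
      intro c hc
      exact bound n c (Finset.ne_of_mem_erase hc) (hyn c (Finset.ne_of_mem_erase hc))
    · simp only [if_neg ha, sub_zero]
      rw [abs_of_nonneg ((hx n).1 a)]
      calc x n a ≤ ψ (θ' 1 + y n a - y n aStar) := bound n a ha (hyn a ha)
        _ ≤ ∑ a' ∈ Finset.univ.erase aStar, ψ (θ' 1 + y n a' - y n aStar) :=
          Finset.single_le_sum hψnn (Finset.mem_erase.2 ⟨ha, Finset.mem_univ a⟩)
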